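/- Let D ⊂ ℝ^d be a compact set with finite positive Lebesgue measure |D|, J = [0,T] with T > 0, k ∈ L²(D×D), f ∈ BC¹(ℝ), and g ∈ C⁰(J, L²(D)). Define κ_D = max(1, √|D|) and N(t,u) = −u + H(k)(f∘u) + g(t) for (t,u) ∈ J × L²(D). Then N is continuous from J × L²(D) to L²(D), for all t ∈ J and u, v ∈ L²(D) it satisfies the Lipschitz estimate ‖N(t,u) − N(t,v)‖₂ ≤ (1 + κ_D ‖k‖_{L²(D×D)} ‖f'‖_∞) ‖u − v‖₂, and the growth bound ‖N(t,u)‖₂ ≤ ‖u‖₂ + κ_D ‖k‖_{L²(D×D)} ‖f‖_∞ + sup_{s∈J}‖g(s)‖₂. -/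

import Mathlib

open MeasureTheory Set
open scoped ENNReal NNReal

private lemma hs_bound {α β : Type*} [MeasurableSpace α] [MeasurableSpace β]
    {μ : Measure α} {ν : Measure β} [SigmaFinite μ] [SigmaFinite ν]
    (K : Lp ℝ 2 (μ.prod ν)) (w : Lp ℝ 2 ν) (Hv : Lp ℝ 2 μ)
    (h : (Hv : α → ℝ) =ᵐ[μ] fun x => ∫ y, K (x, y) * w y ∂ν) :
    ‖Hv‖ ≤ ‖K‖ * ‖w‖ := by
  have hK := Lp.memLp K
  have hK2 : Integrable (fun p : α × β => (K p) ^ 2) (μ.prod ν) := hK.integrable_sq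
  have hsl_int : ∀ᵐ x ∂μ, Integrable (fun y => (K (x, y)) ^ 2) ν := hK2.prod_right_ae
  have hsl_meas : ∀ᵐ x ∂μ, AEStronglyMeasurable (fun y => K (x, y)) ν :=
    hK.aestronglyMeasurable.prodMk_left
  have hsl : ∀ᵐ x ∂μ, MemLp (fun y => K (x, y)) 2 ν := by
    filter_upwards [hsl_int, hsl_meas] with x h1 h2
    exact (memLp_two_iff_integrable_sq h2).2 h1
  have key : ∀ᵐ x ∂μ, ((Hv : α → ℝ) x) ^ 2 ≤ (∫ y, (K (x, y)) ^ 2 ∂ν) * ‖w‖ ^ 2 := by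
    filter_upwards [h, hsl] with x hx hmem
    set kx : Lp ℝ 2 ν := MemLp.toLp _ hmem with hkx
    have hcoe : (kx : β → ℝ) =ᵐ[ν] fun y => K (x, y) := hmem.coeFn_toLp
    have h1 : (Hv : α → ℝ) x = inner ℝ kx w := by
      rw [hx, L2.inner_def]
      refine (integral_congr_ae ?_).symm
      filter_upwards [hcoe] with y hy
      simp [hy, RCLike.inner_apply, mul_comm]
    have h2 : ‖kx‖ ^ 2 = ∫ y, (K (x, y)) ^ 2 ∂ν := by
      rw [← real_inner_self_eq_norm_sq, L2.inner_def]
      refine integral_congr_ae ?_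
      filter_upwards [hcoe] with y hy
      simp [hy, RCLike.inner_apply, sq]
    have h3 : |(inner ℝ kx w : ℝ)| ≤ ‖kx‖ * ‖w‖ := abs_real_inner_le_norm kx w
    calc ((Hv : α → ℝ) x) ^ 2 = (inner ℝ kx w : ℝ) ^ 2 := by rw [h1]
      _ ≤ (‖kx‖ * ‖w‖) ^ 2 := by
          nlinarith [abs_nonneg (inner ℝ kx w : ℝ), sq_abs (inner ℝ kx w : ℝ)]
      _ = (∫ y, (K (x, y)) ^ 2 ∂ν) * ‖w‖ ^ 2 := by rw [mul_pow, h2]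
  have hint1 : Integrable (fun x => ((Hv : α → ℝ) x) ^ 2) μ := (Lp.memLp Hv).integrable_sq
  have hint2 : Integrable (fun x => (∫ y, (K (x, y)) ^ 2 ∂ν) * ‖w‖ ^ 2) μ :=
    (hK2.integral_prod_left).mul_const _
  have e1 : ‖Hv‖ ^ 2 = ∫ x, ((Hv : α → ℝ) x) ^ 2 ∂μ := by
    rw [← real_inner_self_eq_norm_sq, L2.inner_def]
    exact integral_congr_ae (Filter.Eventually.of_forall fun x => by
      simp [RCLike.inner_apply, sq])
  have e3 : ‖K‖ ^ 2 = ∫ p, ((K : α × β → ℝ) p) ^ 2 ∂(μ.prod ν) := by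
    rw [← real_inner_self_eq_norm_sq, L2.inner_def]
    exact integral_congr_ae (Filter.Eventually.of_forall fun x => by
      simp [RCLike.inner_apply, sq])
  have hsq : ‖Hv‖ ^ 2 ≤ (‖K‖ * ‖w‖) ^ 2 := by
    have step : ∫ x, ((Hv : α → ℝ) x) ^ 2 ∂μ ≤
        ∫ x, (∫ y, (K (x, y)) ^ 2 ∂ν) * ‖w‖ ^ 2 ∂μ := integral_mono_ae hint1 hint2 key
    have step2 : ∫ x, (∫ y, (K (x, y)) ^ 2 ∂ν) * ‖w‖ ^ 2 ∂μ =
        (∫ x, ∫ y, (K (x, y)) ^ 2 ∂ν ∂μ) * ‖w‖ ^ 2 := by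
      rw [integral_mul_const]
    have step3 : ∫ x, ∫ y, (K (x, y)) ^ 2 ∂ν ∂μ = ∫ p, ((K : α × β → ℝ) p) ^ 2 ∂(μ.prod ν) :=
      integral_integral hK2
    rw [e1, mul_pow, e3]
    calc ∫ x, ((Hv : α → ℝ) x) ^ 2 ∂μ
        ≤ ∫ x, (∫ y, (K (x, y)) ^ 2 ∂ν) * ‖w‖ ^ 2 ∂μ := step
      _ = (∫ p, ((K : α × β → ℝ) p) ^ 2 ∂(μ.prod ν)) * ‖w‖ ^ 2 := by rw [step2, step3]
  have h0 : (0:ℝ) ≤ ‖K‖ * ‖w‖ := by positivity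
  nlinarith [norm_nonneg Hv]

set_option maxHeartbeats 1000000 in
/-- Properties of the neural-field vector field
`N(t,u) = −u + H(k)(f∘u) + g(t)` on `J × L²(D)`: continuity, the Lipschitz estimate with
constant `1 + κ_D ‖k‖ ‖f'‖_∞`, and the growth bound `‖N(t,u)‖ ≤ ‖u‖ + κ_D ‖k‖ ‖f‖_∞ + ‖g‖`. -/
theorem stmt6 (d : ℕ) (D : Set (EuclideanSpace ℝ (Fin d)))
    (hD : IsCompact D) (hpos : 0 < volume D) (hfin : volume D < ⊤)
    (T : ℝ) (hT : 0 < T)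
    (k : Lp ℝ 2 ((volume.restrict D).prod (volume.restrict D)))
    (Hk : Lp ℝ 2 (volume.restrict D) →L[ℝ] Lp ℝ 2 (volume.restrict D))
    (hHk : ∀ v : Lp ℝ 2 (volume.restrict D),
      (Hk v : _ → ℝ) =ᵐ[volume.restrict D]
        fun x => ∫ x', k (x, x') * v x' ∂(volume.restrict D))
    (f : ℝ → ℝ) (hf : ContDiff ℝ 1 f)
    (hfb : ∃ C, ∀ s : ℝ, |f s| ≤ C) (hfb' : ∃ C, ∀ s : ℝ, |deriv f s| ≤ C)
    (F : Lp ℝ 2 (volume.restrict D) → Lp ℝ 2 (volume.restrict D))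
    (hF : ∀ u : Lp ℝ 2 (volume.restrict D),
      (F u : _ → ℝ) =ᵐ[volume.restrict D] fun x => f (u x))
    (g : C(Set.Icc (0:ℝ) T, Lp ℝ 2 (volume.restrict D))) :
    Continuous (fun p : Set.Icc (0:ℝ) T × Lp ℝ 2 (volume.restrict D) =>
      -p.2 + Hk (F p.2) + g p.1) ∧
    (∀ (t : Set.Icc (0:ℝ) T) (u v : Lp ℝ 2 (volume.restrict D)),
      ‖(-u + Hk (F u) + g t) - (-v + Hk (F v) + g t)‖ ≤
        (1 + max 1 (Real.sqrt (volume D).toReal) * ‖k‖ * (⨆ s : ℝ, |deriv f s|)) * ‖u - v‖) ∧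
    (∀ (t : Set.Icc (0:ℝ) T) (u : Lp ℝ 2 (volume.restrict D)),
      ‖-u + Hk (F u) + g t‖ ≤
        ‖u‖ + max 1 (Real.sqrt (volume D).toReal) * ‖k‖ * (⨆ s : ℝ, |f s|) + ‖g‖) := by
  obtain ⟨Cb, hCb⟩ := hfb'
  obtain ⟨Mb, hMb⟩ := hfb
  set Cs := ⨆ s : ℝ, |deriv f s| with hCsdef
  set M := ⨆ s : ℝ, |f s| with hMdef
  have bddC : BddAbove (Set.range fun s : ℝ => |deriv f s|) :=
    ⟨Cb, by rintro _ ⟨s, rfl⟩; exact hCb s⟩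
  have bddM : BddAbove (Set.range fun s : ℝ => |f s|) :=
    ⟨Mb, by rintro _ ⟨s, rfl⟩; exact hMb s⟩
  have hCs_le : ∀ s, |deriv f s| ≤ Cs := fun s => le_ciSup bddC s
  have hM_le : ∀ s, |f s| ≤ M := fun s => le_ciSup bddM s
  have hCs0 : 0 ≤ Cs := (abs_nonneg _).trans (hCs_le 0)
  have hM0 : 0 ≤ M := (abs_nonneg _).trans (hM_le 0)
  -- Lipschitz property of f
  have hlip : LipschitzWith Cs.toNNReal f := by
    refine lipschitzWith_of_nnnorm_deriv_le (hf.differentiable one_ne_zero) fun x => ?_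
    rw [← NNReal.coe_le_coe, coe_nnnorm, Real.coe_toNNReal _ hCs0, Real.norm_eq_abs]
    exact hCs_le x
  -- Lipschitz bound for F
  have hFlip : ∀ u v : Lp ℝ 2 (volume.restrict D), ‖F u - F v‖ ≤ Cs * ‖u - v‖ := by
    intro u v
    have h1 : ((F u - F v : Lp ℝ 2 (volume.restrict D)) : _ → ℝ) =ᵐ[volume.restrict D]
        fun x => f (u x) - f (v x) := by
      filter_upwards [Lp.coeFn_sub (F u) (F v), hF u, hF v] with x ha hb hc
      simp only [ha, Pi.sub_apply, hb, hc]
    have h2 : ((Cs • (u - v) : Lp ℝ 2 (volume.restrict D)) : _ → ℝ) =ᵐ[volume.restrict D]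
        fun x => Cs * ((u : _ → ℝ) x - v x) := by
      filter_upwards [Lp.coeFn_smul Cs (u - v), Lp.coeFn_sub u v] with x ha hb
      simp only [ha, Pi.smul_apply, hb, Pi.sub_apply, smul_eq_mul]
    have hmono : eLpNorm ((F u - F v : Lp ℝ 2 (volume.restrict D)) : _ → ℝ) 2 (volume.restrict D) ≤
        eLpNorm (((Cs • (u - v) : Lp ℝ 2 (volume.restrict D))) : _ → ℝ) 2 (volume.restrict D) := by
      apply eLpNorm_mono_ae
      filter_upwards [h1, h2] with x ha hb
      rw [ha, hb]
      have hd := hlip.dist_le_mul ((u : _ → ℝ) x) ((v : _ → ℝ) x)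
      simpa [Real.dist_eq, Real.norm_eq_abs, abs_mul, abs_of_nonneg hCs0,
        Real.coe_toNNReal _ hCs0] using hd
    have := ENNReal.toReal_mono (Lp.eLpNorm_ne_top _) hmono
    rw [← Lp.norm_def, ← Lp.norm_def] at this
    calc ‖F u - F v‖ ≤ ‖Cs • (u - v)‖ := this
      _ = Cs * ‖u - v‖ := by rw [norm_smul, Real.norm_eq_abs, abs_of_nonneg hCs0]
  -- Boundedness of F
  have hFbd : ∀ u : Lp ℝ 2 (volume.restrict D),
      ‖F u‖ ≤ Real.sqrt (volume D).toReal * M := by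
    intro u
    have hb : ∀ᵐ x ∂(volume.restrict D), ‖(F u : _ → ℝ) x‖ ≤ M := by
      filter_upwards [hF u] with x hx
      rw [hx, Real.norm_eq_abs]; exact hM_le _
    have hle := eLpNorm_le_of_ae_bound (p := 2) hb
    have huniv : (volume.restrict D) Set.univ = volume D := Measure.restrict_apply_univ _
    have hrt : ((2:ℝ≥0∞)).toReal⁻¹ = (2⁻¹ : ℝ) := by norm_num
    have hne : (volume.restrict D) Set.univ ^ ((2:ℝ≥0∞)).toReal⁻¹ * ENNReal.ofReal M ≠ ⊤ := by
      rw [huniv, hrt]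
      exact ENNReal.mul_ne_top (ENNReal.rpow_ne_top_of_nonneg (by norm_num) hfin.ne)
        ENNReal.ofReal_ne_top
    have := ENNReal.toReal_mono hne hle
    rw [← Lp.norm_def] at this
    refine this.trans (le_of_eq ?_)
    rw [huniv, hrt, ENNReal.toReal_mul, ← ENNReal.toReal_rpow,
      ENNReal.toReal_ofReal hM0, Real.sqrt_eq_rpow]
    norm_num
  -- Hilbert–Schmidt bound
  have hHS : ∀ w : Lp ℝ 2 (volume.restrict D), ‖Hk w‖ ≤ ‖k‖ * ‖w‖ :=
    fun w => hs_bound k w (Hk w) (hHk w)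
  have hκ : (1:ℝ) ≤ max 1 (Real.sqrt (volume D).toReal) := le_max_left _ _
  have hsqrtκ : Real.sqrt (volume D).toReal ≤ max 1 (Real.sqrt (volume D).toReal) :=
    le_max_right _ _
  refine ⟨?_, ?_, ?_⟩
  · -- continuity
    have hFc : Continuous F := by
      refine (LipschitzWith.of_dist_le_mul (K := Cs.toNNReal) fun u v => ?_).continuous
      rw [dist_eq_norm, dist_eq_norm, Real.coe_toNNReal _ hCs0]
      exact hFlip u v
    exact ((continuous_snd.neg).add (Hk.continuous.comp (hFc.comp continuous_snd))).add
      (g.continuous.comp continuous_fst)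
  · -- Lipschitz estimate
    intro t u v
    have heq : (-u + Hk (F u) + g t) - (-v + Hk (F v) + g t) =
        -(u - v) + (Hk (F u) - Hk (F v)) := by abel
    rw [heq]
    have hsub : Hk (F u) - Hk (F v) = Hk (F u - F v) := (map_sub Hk _ _).symm
    have hk0 : (0:ℝ) ≤ ‖k‖ := norm_nonneg k
    calc ‖-(u - v) + (Hk (F u) - Hk (F v))‖
        ≤ ‖-(u - v)‖ + ‖Hk (F u) - Hk (F v)‖ := norm_add_le _ _
      _ = ‖u - v‖ + ‖Hk (F u - F v)‖ := by rw [norm_neg, hsub]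
      _ ≤ ‖u - v‖ + ‖k‖ * ‖F u - F v‖ := add_le_add_right (hHS _) _
      _ ≤ ‖u - v‖ + ‖k‖ * (Cs * ‖u - v‖) :=
          add_le_add_right (mul_le_mul_of_nonneg_left (hFlip u v) hk0) _
      _ ≤ ‖u - v‖ + max 1 (Real.sqrt (volume D).toReal) * (‖k‖ * (Cs * ‖u - v‖)) := by
          have h := le_mul_of_one_le_left
            (mul_nonneg hk0 (mul_nonneg hCs0 (norm_nonneg (u - v)))) hκ
          linarith
      _ = (1 + max 1 (Real.sqrt (volume D).toReal) * ‖k‖ * Cs) * ‖u - v‖ := by ring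
  · -- growth bound
    intro t u
    have hk0 : (0:ℝ) ≤ ‖k‖ := norm_nonneg k
    have hgt : ‖g t‖ ≤ ‖g‖ := g.norm_coe_le_norm t
    have hX : ‖k‖ * (Real.sqrt (volume D).toReal * M) ≤
        max 1 (Real.sqrt (volume D).toReal) * ‖k‖ * M := by
      calc ‖k‖ * (Real.sqrt (volume D).toReal * M)
          = Real.sqrt (volume D).toReal * (‖k‖ * M) := by ring
        _ ≤ max 1 (Real.sqrt (volume D).toReal) * (‖k‖ * M) :=
            mul_le_mul_of_nonneg_right hsqrtκ (mul_nonneg hk0 hM0)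
        _ = max 1 (Real.sqrt (volume D).toReal) * ‖k‖ * M := by ring
    have hHku : ‖Hk (F u)‖ ≤ ‖k‖ * (Real.sqrt (volume D).toReal * M) :=
      (hHS _).trans (mul_le_mul_of_nonneg_left (hFbd u) hk0)
    calc ‖-u + Hk (F u) + g t‖
        ≤ ‖-u + Hk (F u)‖ + ‖g t‖ := norm_add_le _ _
      _ ≤ (‖-u‖ + ‖Hk (F u)‖) + ‖g t‖ := add_le_add_left (norm_add_le _ _) _
      _ = ‖u‖ + ‖Hk (F u)‖ + ‖g t‖ := by rw [norm_neg]
      _ ≤ ‖u‖ + max 1 (Real.sqrt (volume D).toReal) * ‖k‖ * M + ‖g‖ := by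
          have := hHku.trans hX
          linarith
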